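/- Let E be a 2n-dimensional F_2-vector space with nondegenerate hyperbolic quadratic form q, and let F' ⊆ E be an isotropic subspace that is not maximal isotropic. Then there exists an element g ∈ O(E) with nontrivial Dickson invariant which fixes F' pointwise (or at least stabilizes F' as a set). -/

import Mathlib

open Module

/-- The hyperbolic quadratic form on `F₂^n ⊕ F₂^n`. -/
def hypq (n : ℕ) (x : (Fin n ⊕ Fin n) → ZMod 2) : ZMod 2 :=
  ∑ j : Fin n, x (Sum.inl j) * x (Sum.inr j)

def IsIsotropic (n : ℕ) (F : Submodule (ZMod 2) ((Fin n ⊕ Fin n) → ZMod 2)) : Prop :=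
  ∀ x ∈ F, hypq n x = 0

def IsMaxIsotropic (n : ℕ) (F : Submodule (ZMod 2) ((Fin n ⊕ Fin n) → ZMod 2)) : Prop :=
  IsIsotropic n F ∧ ∀ F', IsIsotropic n F' → F ≤ F' → F' = F

/-- The Dickson invariant of a linear endomorphism of an `F₂`-vector space:
the rank of `g - 1` reduced modulo 2. -/
noncomputable def dickson {E : Type*} [AddCommGroup E] [Module (ZMod 2) E]
    (g : E →ₗ[ZMod 2] E) : ZMod 2 :=
  (Module.finrank (ZMod 2) (LinearMap.range (g - LinearMap.id)) : ZMod 2)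

namespace HypAux

abbrev E (n : ℕ) := (Fin n ⊕ Fin n) → ZMod 2

/-- The polar bilinear form of `hypq`. -/
def hypB (n : ℕ) : LinearMap.BilinForm (ZMod 2) (E n) :=
  LinearMap.mk₂ (ZMod 2)
    (fun x y => ∑ j : Fin n, (x (Sum.inl j) * y (Sum.inr j) + x (Sum.inr j) * y (Sum.inl j)))
    (by intro x x' y; rw [← Finset.sum_add_distrib]; apply Finset.sum_congr rfl; intros; simp; ring)
    (by intro c x y; simp only [Pi.smul_apply, smul_eq_mul]; rw [Finset.mul_sum]
        apply Finset.sum_congr rfl; intros; ring)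
    (by intro x y y'; rw [← Finset.sum_add_distrib]; apply Finset.sum_congr rfl; intros; simp; ring)
    (by intro c x y; simp only [Pi.smul_apply, smul_eq_mul]; rw [Finset.mul_sum]
        apply Finset.sum_congr rfl; intros; ring)

lemma hypB_apply (n : ℕ) (x y : E n) :
    hypB n x y = ∑ j : Fin n, (x (Sum.inl j) * y (Sum.inr j) + x (Sum.inr j) * y (Sum.inl j)) :=
  rfl

lemma hypB_symm (n : ℕ) (x y : E n) : hypB n x y = hypB n y x := by
  rw [hypB_apply, hypB_apply]; apply Finset.sum_congr rfl; intros; ring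

lemma polar (n : ℕ) (x y : E n) : hypq n (x + y) = hypq n x + hypq n y + hypB n x y := by
  rw [hypq, hypq, hypq, hypB_apply, ← Finset.sum_add_distrib, ← Finset.sum_add_distrib]
  apply Finset.sum_congr rfl; intros; simp; ring

lemma zmod2_mul_self : ∀ c : ZMod 2, c * c = c := by decide

lemma hypq_smul (n : ℕ) (c : ZMod 2) (x : E n) : hypq n (c • x) = c * hypq n x := by
  rw [hypq, hypq, Finset.mul_sum]
  apply Finset.sum_congr rfl; intro j _
  simp only [Pi.smul_apply, smul_eq_mul]
  rw [show c * x (Sum.inl j) * (c * x (Sum.inr j)) = c * c * (x (Sum.inl j) * x (Sum.inr j)) by ring,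
    zmod2_mul_self _]

lemma hypB_self (n : ℕ) (x : E n) : hypB n x x = 0 := by
  rw [hypB_apply]
  apply Finset.sum_eq_zero; intro j _
  rw [mul_comm]; exact CharTwo.add_self_eq_zero _

lemma hypq_zero (n : ℕ) : hypq n 0 = 0 := by simp [hypq]

lemma hypB_nondeg (n : ℕ) : (hypB n).Nondegenerate := by
  refine (LinearMap.IsRefl.nondegenerate_iff_separatingLeft (fun x y h => by rw [hypB_symm]; exact h)).mpr ?_
  intro x hx
  funext i
  rcases i with j | j
  · have := hx (Pi.single (Sum.inr j) 1)
    rw [hypB_apply] at this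
    simpa [Pi.single_apply, Finset.sum_ite_eq'] using this
  · have := hx (Pi.single (Sum.inl j) 1)
    rw [hypB_apply] at this
    simpa [Pi.single_apply, Finset.sum_ite_eq'] using this

lemma hypB_refl (n : ℕ) : (hypB n).IsRefl := by
  intro x y h; rw [hypB_symm]; exact h

lemma finrank_E (n : ℕ) : finrank (ZMod 2) (E n) = 2 * n := by
  simp [E, Module.finrank_pi, two_mul]

/-- Key existence: an anisotropic vector orthogonal to a non-maximal isotropic subspace. -/
lemma exists_aniso (n : ℕ) (F' : Submodule (ZMod 2) (E n))
    (hiso : IsIsotropic n F') (hnotmax : ¬ IsMaxIsotropic n F') :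
    ∃ v, v ∈ (hypB n).orthogonal F' ∧ hypq n v = 1 := by
  by_contra hcon
  push_neg at hcon
  have hq0 : ∀ v ∈ (hypB n).orthogonal F', hypq n v = 0 := by
    intro v hv
    have h2 : ∀ a : ZMod 2, a ≠ 1 → a = 0 := by decide
    exact h2 _ (hcon v hv)
  -- get a strictly bigger isotropic subspace
  rw [IsMaxIsotropic] at hnotmax
  push_neg at hnotmax
  obtain ⟨F'', hiso'', hle, hne⟩ := hnotmax hiso
  set W := (hypB n).orthogonal F' with hW
  -- F'' ≤ W
  have hFW : F'' ≤ W := by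
    intro x hx
    rw [LinearMap.BilinForm.mem_orthogonal_iff]
    intro y hy
    have h1 : hypq n (y + x) = 0 := hiso'' _ (add_mem (hle hy) hx)
    have := polar n y x
    rw [h1, hiso'' y (hle hy), hiso'' x hx] at this
    simpa [LinearMap.BilinForm.IsOrtho] using this.symm
  -- W is totally isotropic for B
  have hWW : W ≤ (hypB n).orthogonal W := by
    intro x hx
    rw [LinearMap.BilinForm.mem_orthogonal_iff]
    intro y hy
    have h1 : hypq n (y + x) = 0 := hq0 _ (add_mem hy hx)
    have := polar n y x
    rw [h1, hq0 y hy, hq0 x hx] at this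
    simpa [LinearMap.BilinForm.IsOrtho] using this.symm
  have h1 : finrank (ZMod 2) W = 2 * n - finrank (ZMod 2) F' := by
    rw [hW, LinearMap.BilinForm.finrank_orthogonal (hypB_nondeg n), finrank_E]
  have h2 : finrank (ZMod 2) ((hypB n).orthogonal W) = 2 * n - finrank (ZMod 2) W := by
    rw [LinearMap.BilinForm.finrank_orthogonal (hypB_nondeg n), finrank_E]
  have h3 : finrank (ZMod 2) W ≤ finrank (ZMod 2) ((hypB n).orthogonal W) :=
    Submodule.finrank_mono hWW
  have h4 : finrank (ZMod 2) F' < finrank (ZMod 2) F'' :=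
    Submodule.finrank_lt_finrank_of_lt (lt_of_le_of_ne hle (fun h => hne h.symm))
  have h5 : finrank (ZMod 2) F'' ≤ finrank (ZMod 2) W := Submodule.finrank_mono hFW
  have h6 : finrank (ZMod 2) F' ≤ 2 * n := by
    have := Submodule.finrank_le F'
    rwa [finrank_E] at this
  omega

end HypAux

open HypAux
theorem exists_nontrivial_dickson_stabilizing (n : ℕ)
    (F' : Submodule (ZMod 2) ((Fin n ⊕ Fin n) → ZMod 2))
    (hiso : IsIsotropic n F') (hnotmax : ¬ IsMaxIsotropic n F') :
    ∃ g : ((Fin n ⊕ Fin n) → ZMod 2) ≃ₗ[ZMod 2] ((Fin n ⊕ Fin n) → ZMod 2),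
      (∀ x, hypq n (g x) = hypq n x) ∧
      dickson (g : ((Fin n ⊕ Fin n) → ZMod 2) →ₗ[ZMod 2] _) = 1 ∧
      (∀ x ∈ F', g x = x) := by
  obtain ⟨v, hvorth, hqv⟩ := exists_aniso n F' hiso hnotmax
  -- the transvection x ↦ x + B x v • v
  set f : E n →ₗ[ZMod 2] E n :=
    LinearMap.id + LinearMap.smulRight ((hypB n).flip v) v with hf
  have hfapp : ∀ x, f x = x + hypB n x v • v := by
    intro x; simp [hf, LinearMap.smulRight_apply]
  have hinv : Function.Involutive f := by
    intro x
    rw [hfapp, hfapp]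
    simp only [map_add, map_smul, LinearMap.add_apply, LinearMap.smul_apply, smul_eq_mul,
      hypB_self, mul_zero, add_zero]
    rw [add_assoc, ← add_smul, CharTwo.add_self_eq_zero, zero_smul, add_zero]
  refine ⟨LinearEquiv.ofInvolutive f hinv, ?_, ?_, ?_⟩
  · intro x
    show hypq n (f x) = hypq n x
    rw [hfapp, polar, hypq_smul, hqv, mul_one, map_smul, smul_eq_mul, zmod2_mul_self _,
      add_assoc, CharTwo.add_self_eq_zero, add_zero]
  · -- Dickson invariant
    have hv0 : v ≠ 0 := by
      intro h; rw [h, hypq_zero] at hqv; exact one_ne_zero hqv.symm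
    obtain ⟨x₀, hx₀⟩ : ∃ x, hypB n v x ≠ 0 := by
      by_contra h; push_neg at h; exact hv0 ((hypB_nondeg n).1 v h)
    have hx₀' : hypB n x₀ v = 1 := by
      rw [hypB_symm]
      have h2 : ∀ a : ZMod 2, a ≠ 0 → a = 1 := by decide
      exact h2 _ hx₀
    have hrange : LinearMap.range (f - LinearMap.id) = Submodule.span (ZMod 2) {v} := by
      apply le_antisymm
      · rintro _ ⟨x, rfl⟩
        have h3 : ((f - LinearMap.id : E n →ₗ[ZMod 2] E n)) x = hypB n x v • v := by
          show f x - x = _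
          rw [hfapp, add_sub_cancel_left]
        rw [h3]
        exact Submodule.smul_mem _ _ (Submodule.mem_span_singleton_self v)
      · rw [Submodule.span_singleton_le_iff_mem]
        refine ⟨x₀, ?_⟩
        show f x₀ - x₀ = v
        rw [hfapp, add_sub_cancel_left, hx₀', one_smul]
    have hcoe : ((LinearEquiv.ofInvolutive f hinv : E n ≃ₗ[ZMod 2] E n) :
        E n →ₗ[ZMod 2] E n) = f := rfl
    rw [dickson, hcoe, hrange, finrank_span_singleton hv0, Nat.cast_one]
  · intro x hx
    show f x = x
    rw [hfapp]
    rw [hvorth x hx, zero_smul, add_zero]
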